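/- Let m ≥ 1 and consider the graph on 2m vertices consisting of m disjoint edges {⟨2k−1, 2k⟩ : k = 1,…,m}, with MaxCut cost operator C_MC = Σ_{k=1}^m (I − Z_{2k−1}Z_{2k})/2 on the 2m-qubit Hilbert space and mixing operator B = Σ_{i=1}^{2m} X_i. Let U = e^{−iβ_p B}e^{−iγ_p C_MC}···e^{−iβ_1 B}e^{−iγ_1 C_MC} be a QAOA unitary of any depth p ≥ 1 with arbitrary real parameters. Then for every string w ∈ {−1,1}^{2m} with C_MC(w) ≥ m/2 (a good string, cutting at least half the edges), ⟨w| U† C_MC U |w⟩ ≤ C_MC(w). -/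

import Mathlib

/-!
STATEMENT 14: On the decoupled graph of `m` disjoint edges, the warm-start QAOA of any
depth cannot improve the MaxCut cost of any good string (one cutting at least half the
edges): `⟨w|U†C_MC U|w⟩ ≤ C_MC(w)`.
-/

open scoped Matrix

/-- The type of `n`-bit strings, identified with `{-1,1}ⁿ` via `sgn`. -/
abbrev Str (n : ℕ) := Fin n → Bool

/-- The `±1` value of a bit. -/
noncomputable def sgn (b : Bool) : ℝ := if b then 1 else -1

/-- Matrices on the `n`-qubit Hilbert space `ℂ^(2^n)`. -/
abbrev Mat (n : ℕ) := Matrix (Str n) (Str n) ℂ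

/-- The Pauli `Z` operator on qubit `i`. -/
noncomputable def PauliZ (n : ℕ) (i : Fin n) : Mat n :=
  Matrix.diagonal fun z => (sgn (z i) : ℂ)

/-- The Pauli `X` operator on qubit `i`. -/
noncomputable def PauliX (n : ℕ) (i : Fin n) : Mat n :=
  Matrix.of fun z z' => if z' = Function.update z i (!z i) then 1 else 0

/-- The mixing operator `B = Σᵢ Xᵢ`. -/
noncomputable def mixer (n : ℕ) : Mat n := ∑ i, PauliX n i

/-- Matrix exponential. -/
noncomputable def mexp {ι : Type*} [Fintype ι] [DecidableEq ι] (A : Matrix ι ι ℂ) : Matrix ι ι ℂ :=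
  NormedSpace.exp A

/-- The first endpoint `2k−1` (0-indexed: `2k`) of the `k`-th disjoint edge. -/
def v₁ (m : ℕ) (k : Fin m) : Fin (2 * m) := ⟨2 * (k : ℕ), by omega⟩

/-- The second endpoint `2k` (0-indexed: `2k+1`) of the `k`-th disjoint edge. -/
def v₂ (m : ℕ) (k : Fin m) : Fin (2 * m) := ⟨2 * (k : ℕ) + 1, by omega⟩

/-- The MaxCut cost operator `C_MC = Σ_k (I − Z_{2k−1} Z_{2k})/2` of the graph
consisting of `m` disjoint edges on `2m` vertices. -/
noncomputable def CMCop (m : ℕ) : Mat (2 * m) :=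
  ∑ k : Fin m, (2 : ℂ)⁻¹ • ((1 : Mat (2 * m)) - PauliZ (2 * m) (v₁ m k) * PauliZ (2 * m) (v₂ m k))

/-- The classical MaxCut value `C_MC(w) = Σ_k (1 − w_{2k−1} w_{2k})/2`. -/
noncomputable def CMCval (m : ℕ) (w : Str (2 * m)) : ℝ :=
  ∑ k : Fin m, (1 - sgn (w (v₁ m k)) * sgn (w (v₂ m k))) / 2

/-- The depth-`p` QAOA unitary
`U = e^{−iβ_p B} e^{−iγ_p C_MC} ⋯ e^{−iβ_1 B} e^{−iγ_1 C_MC}`. -/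
noncomputable def qaoaU (m : ℕ) (p : ℕ) (γ β : Fin p → ℝ) : Mat (2 * m) :=
  (List.ofFn fun k : Fin p =>
    mexp ((-(Complex.I * (β k.rev))) • mixer (2 * m)) *
    mexp ((-(Complex.I * (γ k.rev))) • CMCop m)).prod

/-! ### Auxiliary development -/

namespace Stmt14

open Matrix

/-- 2-qubit matrices. -/
abbrev Q2 := Matrix (Bool × Bool) (Bool × Bool) ℂ

/-- The pair of bits of `z` at edge `k`. -/
def pr {m : ℕ} (z : Str (2 * m)) (k : Fin m) : Bool × Bool := (z (v₁ m k), z (v₂ m k))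

lemma v1_ne_v2 {m : ℕ} (k k' : Fin m) : v₁ m k ≠ v₂ m k' := by
  simp only [v₁, v₂, Fin.ne_iff_vne]; omega

lemma v1_inj {m : ℕ} {k k' : Fin m} (h : v₁ m k = v₁ m k') : k = k' := by
  simp only [v₁, Fin.mk.injEq] at h; exact Fin.ext (by omega)

lemma v2_inj {m : ℕ} {k k' : Fin m} (h : v₂ m k = v₂ m k') : k = k' := by
  simp only [v₂, Fin.mk.injEq] at h; exact Fin.ext (by omega)

/-- Strings on `2m` bits are families of `m` pairs of bits. -/
def splitEquiv (m : ℕ) : Str (2 * m) ≃ (Fin m → Bool × Bool) where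
  toFun z := fun k => pr z k
  invFun g := fun i => if (i : ℕ) % 2 = 0 then (g ⟨(i : ℕ) / 2, by omega⟩).1
    else (g ⟨(i : ℕ) / 2, by omega⟩).2
  left_inv z := by
    funext i
    rcases Nat.even_or_odd (i : ℕ) with h | h
    · obtain ⟨c, hc⟩ := h
      have h2 : (i : ℕ) % 2 = 0 := by omega
      simp only [h2, if_pos, pr]
      congr 1
      exact Fin.ext (by simp [v₁]; omega)
    · obtain ⟨c, hc⟩ := h
      have h2 : ¬ ((i : ℕ) % 2 = 0) := by omega
      simp only [h2, if_neg, pr, if_false]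
      congr 1
      exact Fin.ext (by simp [v₂]; omega)
  right_inv g := by
    funext k
    simp only [pr, v₁, v₂]
    have h1 : (2 * (k : ℕ)) % 2 = 0 := by omega
    have h2 : ¬ ((2 * (k : ℕ) + 1) % 2 = 0) := by omega
    have h3 : (2 * (k : ℕ)) / 2 = (k : ℕ) := by omega
    have h4 : (2 * (k : ℕ) + 1) / 2 = (k : ℕ) := by omega
    simp only [h1, h2, if_pos, if_neg, if_false, h3, h4, if_true]

/-- The tensor-product matrix of a family of 2-qubit matrices over the `m` edges. -/
noncomputable def T {m : ℕ} (As : Fin m → Q2) : Mat (2 * m) :=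
  Matrix.of fun z z' => ∏ k, As k (pr z k) (pr z' k)

lemma pr_eq_iff {m : ℕ} {z z' : Str (2 * m)} : (∀ k, pr z k = pr z' k) ↔ z = z' := by
  constructor
  · intro h
    have := congrArg (splitEquiv m).symm (funext h : (splitEquiv m) z = (splitEquiv m) z')
    simpa using this
  · rintro rfl _; rfl

lemma T_one {m : ℕ} : T (fun _ : Fin m => (1 : Q2)) = 1 := by
  ext z z'
  show (∏ k, (1 : Q2) (pr z k) (pr z' k)) = (1 : Mat (2 * m)) z z'
  by_cases h : z = z'
  · subst h
    simp [Matrix.one_apply]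
  · rw [Matrix.one_apply_ne h]
    obtain ⟨k, hk⟩ : ∃ k, pr z k ≠ pr z' k := by
      by_contra hc
      push_neg at hc
      exact h (pr_eq_iff.mp hc)
    exact Finset.prod_eq_zero (Finset.mem_univ k) (by rw [Matrix.one_apply_ne hk])

lemma sum_str_eq {M : Type*} [AddCommMonoid M] {m : ℕ} (F : (Fin m → Bool × Bool) → M) :
    ∑ z : Str (2 * m), F (fun k => pr z k) = ∑ g : Fin m → Bool × Bool, F g := by
  refine Fintype.sum_equiv (splitEquiv m) _ _ fun z => rfl

lemma T_mul {m : ℕ} (As Bs : Fin m → Q2) : T As * T Bs = T (fun k => As k * Bs k) := by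
  ext z z'
  show (∑ y, (∏ k, As k (pr z k) (pr y k)) * ∏ k, Bs k (pr y k) (pr z' k))
      = ∏ k, (As k * Bs k) (pr z k) (pr z' k)
  simp only [Matrix.mul_apply]
  rw [Finset.prod_univ_sum (fun _ => (Finset.univ : Finset (Bool × Bool)))
    (fun k x => As k (pr z k) x * Bs k x (pr z' k))]
  rw [Fintype.piFinset_univ]
  rw [← sum_str_eq (fun g => ∏ k, As k (pr z k) (g k) * Bs k (g k) (pr z' k))]
  exact Finset.sum_congr rfl fun y _ => (Finset.prod_mul_distrib).symm

/-- The family which is `A` at `k` and the identity elsewhere. -/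
noncomputable def sing {m : ℕ} (k : Fin m) (A : Q2) : Fin m → Q2 := fun j => if j = k then A else 1

lemma prod_one_erase {m : ℕ} (k : Fin m) (z z' : Str (2 * m)) :
    (∏ j ∈ Finset.univ.erase k, (1 : Q2) (pr z j) (pr z' j))
      = if (∀ j, j ≠ k → pr z j = pr z' j) then 1 else 0 := by
  by_cases h : ∀ j, j ≠ k → pr z j = pr z' j
  · rw [if_pos h]
    refine Finset.prod_eq_one fun j hj => ?_
    rw [h j (Finset.ne_of_mem_erase hj), Matrix.one_apply_eq]
  · rw [if_neg h]
    push_neg at h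
    obtain ⟨j, hj, hne⟩ := h
    exact Finset.prod_eq_zero (Finset.mem_erase.mpr ⟨hj, Finset.mem_univ j⟩)
      (Matrix.one_apply_ne hne)

lemma T_sing_apply {m : ℕ} (k : Fin m) (A : Q2) (z z' : Str (2 * m)) :
    T (sing k A) z z'
      = A (pr z k) (pr z' k) * if (∀ j, j ≠ k → pr z j = pr z' j) then 1 else 0 := by
  rw [← prod_one_erase k z z']
  show (∏ j, sing k A j (pr z j) (pr z' j)) = _
  rw [← Finset.mul_prod_erase Finset.univ _ (Finset.mem_univ k)]
  congr 1
  · simp [sing]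
  · refine Finset.prod_congr rfl fun j hj => ?_
    rw [sing, if_neg (Finset.ne_of_mem_erase hj)]

/-- Embedding a two-qubit matrix at edge `k`, as an algebra homomorphism. -/
noncomputable def embk {m : ℕ} (k : Fin m) : Q2 →ₐ[ℂ] Mat (2 * m) :=
  AlgHom.ofLinearMap
    { toFun := fun A => T (sing k A)
      map_add' := by
        intro A B
        ext z z'
        simp only [Matrix.add_apply, T_sing_apply, Matrix.add_apply]
        ring
      map_smul' := by
        intro c A
        ext z z'
        simp only [T_sing_apply, Matrix.smul_apply, RingHom.id_apply, smul_eq_mul]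
        ring }
    (by
      show T (sing k 1) = 1
      rw [show sing k (1 : Q2) = fun _ => 1 by funext j; simp [sing]]
      exact T_one)
    (by
      intro A B
      show T (sing k (A * B)) = T (sing k A) * T (sing k B)
      rw [T_mul]
      refine congrArg T (funext fun j => ?_)
      by_cases h : j = k <;> simp [sing, h])

lemma embk_apply {m : ℕ} (k : Fin m) (A : Q2) (z z' : Str (2 * m)) :
    embk k A z z'
      = A (pr z k) (pr z' k) * if (∀ j, j ≠ k → pr z j = pr z' j) then 1 else 0 :=
  T_sing_apply k A z z'

lemma embk_continuous {m : ℕ} (k : Fin m) : Continuous (embk k) :=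
  LinearMap.continuous_of_finiteDimensional (embk k).toLinearMap

lemma embk_exp {m : ℕ} (k : Fin m) (A : Q2) :
    NormedSpace.exp (embk k A) = embk k (NormedSpace.exp A) := by
  letI : SeminormedRing Q2 := Matrix.linftyOpSemiNormedRing
  letI : NormedRing Q2 := Matrix.linftyOpNormedRing
  letI : NormedAlgebra ℂ Q2 := Matrix.linftyOpNormedAlgebra
  letI : SeminormedRing (Mat (2 * m)) := Matrix.linftyOpSemiNormedRing
  letI : NormedRing (Mat (2 * m)) := Matrix.linftyOpNormedRing
  letI : NormedAlgebra ℂ (Mat (2 * m)) := Matrix.linftyOpNormedAlgebra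
  letI : NormedAlgebra ℚ Q2 := Matrix.linftyOpNormedAlgebra
  letI : NormedAlgebra ℚ (Mat (2 * m)) := Matrix.linftyOpNormedAlgebra
  exact (NormedSpace.map_exp (embk k) (embk_continuous k) A).symm

lemma embk_commute {m : ℕ} {j k : Fin m} (h : j ≠ k) (A B : Q2) :
    Commute (embk j A) (embk k B) := by
  show embk j A * embk k B = embk k B * embk j A
  show T (sing j A) * T (sing k B) = T (sing k B) * T (sing j A)
  rw [T_mul, T_mul]
  refine congrArg T (funext fun i => ?_)
  by_cases hj : i = j
  · subst hj; simp [sing, h]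
  · by_cases hk : i = k
    · subst hk; simp [sing, hj]
    · simp [sing, hj, hk]

lemma noncommProd_embk {m : ℕ} (g : Fin m → Q2) (s : Finset (Fin m)) (h) :
    s.noncommProd (fun k => embk k (g k)) h = T (fun k => if k ∈ s then g k else 1) := by
  classical
  induction s using Finset.induction_on with
  | empty => simp only [Finset.noncommProd_empty, Finset.notMem_empty, if_false]; exact T_one.symm
  | @insert a s ha ih =>
    rw [Finset.noncommProd_insert_of_notMem _ _ _ _ ha]
    rw [ih (h.mono (Finset.coe_subset.mpr (Finset.subset_insert a s)))]
    show T (sing a (g a)) * _ = _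
    rw [T_mul]
    refine congrArg T (funext fun i => ?_)
    by_cases hi : i = a
    · subst hi
      simp [sing, ha, Finset.mem_insert]
    · by_cases hs : i ∈ s <;> simp [sing, hi, hs, Finset.mem_insert]

set_option maxHeartbeats 1000000 in
lemma exp_sum_embk {m : ℕ} (h2 : Q2) :
    NormedSpace.exp (∑ k : Fin m, embk k h2)
      = T (fun _ => NormedSpace.exp h2) := by
  have hcomm : ((Finset.univ : Finset (Fin m)) : Set (Fin m)).Pairwise
      (Function.onFun Commute fun k => embk k h2) := fun j _ k _ hjk => embk_commute hjk h2 h2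
  rw [Matrix.exp_sum_of_commute Finset.univ (fun k => embk k h2) hcomm]
  rw [Finset.noncommProd_congr rfl (fun k _ => embk_exp k h2)
    (fun j _ k _ hjk => ((embk_commute hjk h2 h2).exp))]
  refine (noncommProd_embk (fun _ => NormedSpace.exp h2) _ _).trans ?_
  simp only [Finset.mem_univ, if_true]

/-! ### Two-qubit operators and the decomposition of the mixer and cost operators -/

/-- `X ⊗ 1`. -/
noncomputable def x1 : Q2 := Matrix.of fun y y' => if y' = (!y.1, y.2) then 1 else 0

/-- `1 ⊗ X`. -/
noncomputable def x2 : Q2 := Matrix.of fun y y' => if y' = (y.1, !y.2) then 1 else 0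

/-- `Z ⊗ Z`. -/
noncomputable def zz : Q2 := Matrix.diagonal fun y => (sgn y.1 : ℂ) * (sgn y.2 : ℂ)

/-- The two-qubit mixer. -/
noncomputable def b2 : Q2 := x1 + x2

/-- The two-qubit cost operator. -/
noncomputable def c2 : Q2 := (2 : ℂ)⁻¹ • ((1 : Q2) - zz)

lemma cover {m : ℕ} (i : Fin (2 * m)) : ∃ k : Fin m, i = v₁ m k ∨ i = v₂ m k := by
  refine ⟨⟨(i : ℕ) / 2, by omega⟩, ?_⟩
  rcases Nat.even_or_odd (i : ℕ) with ⟨c, hc⟩ | ⟨c, hc⟩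
  · exact Or.inl (Fin.ext (by simp [v₁]; omega))
  · exact Or.inr (Fin.ext (by simp [v₂]; omega))

lemma update_v1_iff {m : ℕ} (k : Fin m) (z z' : Str (2 * m)) (b : Bool) :
    z' = Function.update z (v₁ m k) b ↔
      (z' (v₁ m k) = b ∧ z' (v₂ m k) = z (v₂ m k) ∧ ∀ j, j ≠ k → pr z j = pr z' j) := by
  constructor
  · rintro rfl
    refine ⟨Function.update_self _ _ _, Function.update_of_ne (v1_ne_v2 k k).symm _ _, ?_⟩
    intro j hj
    unfold pr
    rw [Function.update_of_ne (fun h => hj (v1_inj h.symm).symm) _ _,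
      Function.update_of_ne (fun h => (v1_ne_v2 k j) h.symm) _ _]
  · rintro ⟨h1, h2, h3⟩
    funext i
    obtain ⟨j, hj | hj⟩ := cover i
    · subst hj
      by_cases hjk : j = k
      · subst hjk; rw [Function.update_self]; exact h1
      · rw [Function.update_of_ne (fun h => hjk (v1_inj h))]
        exact (congrArg Prod.fst (h3 j hjk)).symm
    · subst hj
      by_cases hjk : j = k
      · subst hjk
        rw [Function.update_of_ne (v1_ne_v2 j j).symm]
        exact h2
      · rw [Function.update_of_ne (fun h => (v1_ne_v2 k j) h.symm)]
        exact (congrArg Prod.snd (h3 j hjk)).symm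

lemma update_v2_iff {m : ℕ} (k : Fin m) (z z' : Str (2 * m)) (b : Bool) :
    z' = Function.update z (v₂ m k) b ↔
      (z' (v₂ m k) = b ∧ z' (v₁ m k) = z (v₁ m k) ∧ ∀ j, j ≠ k → pr z j = pr z' j) := by
  constructor
  · rintro rfl
    refine ⟨Function.update_self _ _ _, Function.update_of_ne (v1_ne_v2 k k) _ _, ?_⟩
    intro j hj
    unfold pr
    rw [Function.update_of_ne (v1_ne_v2 j k) _ _,
      Function.update_of_ne (fun h => hj (v2_inj h.symm).symm) _ _]
  · rintro ⟨h1, h2, h3⟩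
    funext i
    obtain ⟨j, hj | hj⟩ := cover i
    · subst hj
      by_cases hjk : j = k
      · subst hjk
        rw [Function.update_of_ne (v1_ne_v2 j j)]
        exact h2
      · rw [Function.update_of_ne (v1_ne_v2 j k)]
        exact (congrArg Prod.fst (h3 j hjk)).symm
    · subst hj
      by_cases hjk : j = k
      · subst hjk; rw [Function.update_self]; exact h1
      · rw [Function.update_of_ne (fun h => hjk (v2_inj h))]
        exact (congrArg Prod.snd (h3 j hjk)).symm

lemma embk_x1 {m : ℕ} (k : Fin m) : embk k x1 = PauliX (2 * m) (v₁ m k) := by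
  ext z z'
  rw [embk_apply]
  show (if pr z' k = (!(pr z k).1, (pr z k).2) then (1:ℂ) else 0) * _
    = if z' = Function.update z (v₁ m k) (!z (v₁ m k)) then 1 else 0
  by_cases hA : pr z' k = (!(pr z k).1, (pr z k).2)
  · by_cases hB : ∀ j, j ≠ k → pr z j = pr z' j
    · rw [if_pos hA, if_pos hB, if_pos, mul_one]
      rw [update_v1_iff]
      exact ⟨congrArg Prod.fst hA, congrArg Prod.snd hA, hB⟩
    · rw [if_neg hB, mul_zero, if_neg]
      rw [update_v1_iff]
      exact fun h => hB h.2.2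
  · rw [if_neg hA, zero_mul, if_neg]
    rw [update_v1_iff]
    rintro ⟨h1, h2, -⟩
    exact hA (Prod.ext h1 h2)

lemma embk_x2 {m : ℕ} (k : Fin m) : embk k x2 = PauliX (2 * m) (v₂ m k) := by
  ext z z'
  rw [embk_apply]
  show (if pr z' k = ((pr z k).1, !(pr z k).2) then (1:ℂ) else 0) * _
    = if z' = Function.update z (v₂ m k) (!z (v₂ m k)) then 1 else 0
  by_cases hA : pr z' k = ((pr z k).1, !(pr z k).2)
  · by_cases hB : ∀ j, j ≠ k → pr z j = pr z' j
    · rw [if_pos hA, if_pos hB, if_pos, mul_one]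
      rw [update_v2_iff]
      exact ⟨congrArg Prod.snd hA, congrArg Prod.fst hA, hB⟩
    · rw [if_neg hB, mul_zero, if_neg]
      rw [update_v2_iff]
      exact fun h => hB h.2.2
  · rw [if_neg hA, zero_mul, if_neg]
    rw [update_v2_iff]
    rintro ⟨h1, h2, -⟩
    exact hA (Prod.ext h2 h1)

lemma embk_zz {m : ℕ} (k : Fin m) :
    embk k zz = PauliZ (2 * m) (v₁ m k) * PauliZ (2 * m) (v₂ m k) := by
  ext z z'
  rw [embk_apply]
  rw [show PauliZ (2 * m) (v₁ m k) * PauliZ (2 * m) (v₂ m k)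
    = Matrix.diagonal (fun z => (sgn (z (v₁ m k)) : ℂ) * (sgn (z (v₂ m k)) : ℂ)) by
      unfold PauliZ; rw [Matrix.diagonal_mul_diagonal]]
  rw [show zz (pr z k) (pr z' k)
    = if pr z k = pr z' k then (sgn (z (v₁ m k)) : ℂ) * (sgn (z (v₂ m k)) : ℂ) else 0 by
      unfold zz; rw [Matrix.diagonal_apply]; rfl]
  by_cases h : z = z'
  · subst h
    simp [Matrix.diagonal_apply_eq]
  · rw [Matrix.diagonal_apply_ne _ h]
    by_cases hA : pr z k = pr z' k
    · rw [if_pos hA]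
      rw [if_neg, mul_zero]
      intro hB
      exact h (pr_eq_iff.mp fun j => by
        by_cases hjk : j = k
        · subst hjk; exact hA
        · exact hB j hjk)
    · rw [if_neg hA, zero_mul]

/-- The obvious equivalence `Bool × Fin m ≃ Fin (2m)`. -/
def pairEquiv (m : ℕ) : Bool × Fin m ≃ Fin (2 * m) where
  toFun bk := if bk.1 then v₂ m bk.2 else v₁ m bk.2
  invFun i := (decide ((i : ℕ) % 2 = 1), ⟨(i : ℕ) / 2, by omega⟩)
  left_inv := by
    rintro ⟨b, k⟩
    cases b
    · simp only [Bool.false_eq_true, if_false]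
      refine Prod.ext ?_ (Fin.ext ?_)
      · show decide ((2 * (k : ℕ)) % 2 = 1) = false
        simp only [decide_eq_false_iff_not]
        omega
      · show (2 * (k : ℕ)) / 2 = k
        omega
    · simp only [if_true]
      refine Prod.ext ?_ (Fin.ext ?_)
      · show decide ((2 * (k : ℕ) + 1) % 2 = 1) = true
        simp only [decide_eq_true_eq]
        omega
      · show (2 * (k : ℕ) + 1) / 2 = k
        omega
  right_inv := by
    intro i
    rcases Nat.even_or_odd (i : ℕ) with ⟨c, hc⟩ | ⟨c, hc⟩
    · have h2 : ¬ ((i : ℕ) % 2 = 1) := by omega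
      simp only [h2, decide_false, Bool.false_eq_true, if_false]
      exact Fin.ext (by simp [v₁]; omega)
    · have h2 : (i : ℕ) % 2 = 1 := by omega
      simp only [h2, decide_true, if_true]
      exact Fin.ext (by simp [v₂]; omega)

lemma mixer_eq {m : ℕ} : mixer (2 * m) = ∑ k : Fin m, embk k b2 := by
  unfold mixer
  rw [← Equiv.sum_comp (pairEquiv m) (fun i => PauliX (2 * m) i)]
  rw [Fintype.sum_prod_type]
  rw [Fintype.sum_bool]
  rw [← Finset.sum_add_distrib]
  refine Finset.sum_congr rfl fun k _ => ?_
  show PauliX (2 * m) (v₂ m k) + PauliX (2 * m) (v₁ m k) = embk k b2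
  rw [show b2 = x1 + x2 from rfl, map_add, embk_x1, embk_x2, add_comm]

lemma CMCop_eq {m : ℕ} : CMCop m = ∑ k : Fin m, embk k c2 := by
  unfold CMCop
  refine Finset.sum_congr rfl fun k _ => ?_
  have h : embk k c2 = (2 : ℂ)⁻¹ • ((1 : Mat (2 * m)) - embk k zz) := by
    unfold c2
    rw [_root_.map_smul, map_sub, _root_.map_one]
  rw [h, embk_zz]

/-! ### The two-qubit QAOA unitary and its properties -/

lemma T_apply {m : ℕ} (As : Fin m → Q2) (z z' : Str (2 * m)) :
    T As z z' = ∏ k, As k (pr z k) (pr z' k) := rfl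

/-- The constant tensor monoid homomorphism. -/
noncomputable def Tc (m : ℕ) : Q2 →* Mat (2 * m) where
  toFun A := T (fun _ => A)
  map_one' := T_one
  map_mul' A B := (T_mul _ _).symm

/-- The two-qubit QAOA unitary. -/
noncomputable def E2 (p : ℕ) (γ β : Fin p → ℝ) : Q2 :=
  (List.ofFn fun k : Fin p =>
    NormedSpace.exp ((-(Complex.I * (β k.rev))) • b2) *
    NormedSpace.exp ((-(Complex.I * (γ k.rev))) • c2)).prod

lemma exp_smul_mixer {m : ℕ} (c : ℂ) :
    NormedSpace.exp (c • mixer (2 * m)) = Tc m (NormedSpace.exp (c • b2)) := by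
  rw [mixer_eq, Finset.smul_sum]
  rw [show (∑ k : Fin m, c • embk k b2) = ∑ k : Fin m, embk k (c • b2) by
    refine Finset.sum_congr rfl fun k _ => ?_; rw [_root_.map_smul]]
  exact exp_sum_embk (c • b2)

lemma exp_smul_cmc {m : ℕ} (c : ℂ) :
    NormedSpace.exp (c • CMCop m) = Tc m (NormedSpace.exp (c • c2)) := by
  rw [CMCop_eq, Finset.smul_sum]
  rw [show (∑ k : Fin m, c • embk k c2) = ∑ k : Fin m, embk k (c • c2) by
    refine Finset.sum_congr rfl fun k _ => ?_; rw [_root_.map_smul]]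
  exact exp_sum_embk (c • c2)

lemma qaoaU_eq (m p : ℕ) (γ β : Fin p → ℝ) : qaoaU m p γ β = Tc m (E2 p γ β) := by
  unfold qaoaU E2
  rw [map_list_prod, List.map_ofFn]
  refine congrArg List.prod (congrArg List.ofFn (funext fun k => ?_))
  show mexp _ * mexp _ = (Tc m) (_ * _)
  rw [_root_.map_mul]
  unfold mexp
  rw [exp_smul_mixer, exp_smul_cmc]

/-! ### Hermiticity and unitarity -/

lemma b2_herm : b2ᴴ = b2 := by
  ext ⟨a, b⟩ ⟨c, d⟩
  simp only [b2, x1, x2, Matrix.conjTranspose_apply, Matrix.add_apply, Matrix.of_apply]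
  cases a <;> cases b <;> cases c <;> cases d <;> simp

lemma c2_herm : c2ᴴ = c2 := by
  ext ⟨a, b⟩ ⟨c, d⟩
  simp only [c2, zz, Matrix.conjTranspose_apply, Matrix.smul_apply, Matrix.sub_apply,
    Matrix.one_apply, Matrix.diagonal_apply, smul_eq_mul]
  cases a <;> cases b <;> cases c <;> cases d <;>
    simp [sgn, Complex.ext_iff] <;> norm_num

lemma skew_smul {t : ℝ} {H : Q2} (h : Hᴴ = H) :
    ((-(Complex.I * (t : ℂ))) • H)ᴴ = -((-(Complex.I * (t : ℂ))) • H) := by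
  rw [Matrix.conjTranspose_smul, h, ← neg_smul]
  congr 1
  simp [Complex.star_def, _root_.map_mul, Complex.conj_ofReal, Complex.conj_I]

lemma exp_skew_unitary (A : Q2) (h : Aᴴ = -A) :
    NormedSpace.exp A ∈ unitary Q2 := by
  have h1 : star (NormedSpace.exp A) = NormedSpace.exp (-A) := by
    rw [show star (NormedSpace.exp A) = (NormedSpace.exp A)ᴴ from rfl,
      ← Matrix.exp_conjTranspose, h]
  rw [Unitary.mem_iff, h1]
  constructor
  · rw [← Matrix.exp_add_of_commute (-A) A (Commute.refl A).neg_left,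
      neg_add_cancel, NormedSpace.exp_zero]
  · rw [← Matrix.exp_add_of_commute A (-A) (Commute.refl A).neg_right,
      add_neg_cancel, NormedSpace.exp_zero]

lemma E2_unitary (p : ℕ) (γ β : Fin p → ℝ) : E2 p γ β ∈ unitary Q2 := by
  refine Submonoid.list_prod_mem _ fun x hx => ?_
  rw [List.mem_ofFn] at hx
  obtain ⟨k, rfl⟩ := hx
  exact mul_mem (exp_skew_unitary _ (skew_smul b2_herm)) (exp_skew_unitary _ (skew_smul c2_herm))

lemma E2_col (p : ℕ) (γ β : Fin p → ℝ) (x : Bool × Bool) :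
    ∑ y, Complex.normSq (E2 p γ β y x) = 1 := by
  have h := ((Unitary.mem_iff).mp (E2_unitary p γ β)).1
  have h2 := congrFun (congrFun h x) x
  rw [Matrix.mul_apply, Matrix.one_apply_eq] at h2
  have h3 : ∀ y, (star (E2 p γ β) : Q2) x y * E2 p γ β y x
      = ((Complex.normSq (E2 p γ β y x) : ℝ) : ℂ) := by
    intro y
    rw [show (star (E2 p γ β) : Q2) x y = star (E2 p γ β y x) from rfl]
    rw [Complex.star_def, Complex.normSq_eq_conj_mul_self]
  rw [Finset.sum_congr rfl fun y _ => h3 y] at h2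
  rw [← Complex.ofReal_sum] at h2
  exact_mod_cast h2

lemma E2_row (p : ℕ) (γ β : Fin p → ℝ) (x : Bool × Bool) :
    ∑ y, Complex.normSq (E2 p γ β x y) = 1 := by
  have h := ((Unitary.mem_iff).mp (E2_unitary p γ β)).2
  have h2 := congrFun (congrFun h x) x
  rw [Matrix.mul_apply, Matrix.one_apply_eq] at h2
  have h3 : ∀ y, E2 p γ β x y * (star (E2 p γ β) : Q2) y x
      = ((Complex.normSq (E2 p γ β x y) : ℝ) : ℂ) := by
    intro y
    rw [show (star (E2 p γ β) : Q2) y x = star (E2 p γ β x y) from rfl]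
    rw [Complex.star_def, Complex.mul_conj]
  rw [Finset.sum_congr rfl fun y _ => h3 y] at h2
  rw [← Complex.ofReal_sum] at h2
  exact_mod_cast h2

/-! ### The spin-flip symmetry -/

/-- Flipping both bits of a pair. -/
def flipB (y : Bool × Bool) : Bool × Bool := (!y.1, !y.2)

lemma flipB_flipB (y : Bool × Bool) : flipB (flipB y) = y := by
  cases y; simp [flipB]

/-- `X ⊗ X`. -/
noncomputable def Fm : Q2 := Matrix.of fun y y' => if y' = flipB y then 1 else 0

lemma mulF (A : Q2) (x y : Bool × Bool) : (A * Fm) x y = A x (flipB y) := by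
  simp only [Matrix.mul_apply, Fm, Matrix.of_apply, mul_ite, mul_one, mul_zero]
  have hc : ∀ u : Bool × Bool, (y = flipB u) = (u = flipB y) := by
    intro u
    apply propext
    constructor
    · rintro rfl; rw [flipB_flipB]
    · rintro rfl; rw [flipB_flipB]
  simp_rw [hc]
  rw [Finset.sum_ite_eq' Finset.univ (flipB y) (fun u => A x u)]
  simp

lemma Fmul (A : Q2) (x y : Bool × Bool) : (Fm * A) x y = A (flipB x) y := by
  simp only [Matrix.mul_apply, Fm, Matrix.of_apply, ite_mul, one_mul, zero_mul]
  rw [Finset.sum_ite_eq' Finset.univ (flipB x) (fun u => A u y)]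
  simp

lemma Fm_comm_b2 : Commute Fm b2 := by
  show Fm * b2 = b2 * Fm
  ext x y
  rw [mulF, Fmul]
  rcases x with ⟨a, b⟩
  rcases y with ⟨c, d⟩
  simp only [b2, x1, x2, flipB, Matrix.add_apply, Matrix.of_apply]
  cases a <;> cases b <;> cases c <;> cases d <;> simp

lemma Fm_comm_c2 : Commute Fm c2 := by
  show Fm * c2 = c2 * Fm
  ext x y
  rw [mulF, Fmul]
  rcases x with ⟨a, b⟩
  rcases y with ⟨c, d⟩
  simp only [c2, zz, flipB, Matrix.smul_apply, Matrix.sub_apply, smul_eq_mul]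
  cases a <;> cases b <;> cases c <;> cases d <;>
    simp [Matrix.one_apply, Matrix.diagonal_apply, sgn] <;> ring

lemma Fm_comm_E2 (p : ℕ) (γ β : Fin p → ℝ) : Commute Fm (E2 p γ β) := by
  refine Commute.list_prod_right _ _ fun x hx => ?_
  rw [List.mem_ofFn] at hx
  obtain ⟨k, rfl⟩ := hx
  exact ((Fm_comm_b2.smul_right _).exp_right).mul_right
    ((Fm_comm_c2.smul_right _).exp_right)

lemma E2_flip (p : ℕ) (γ β : Fin p → ℝ) (x y : Bool × Bool) :
    E2 p γ β x (flipB y) = E2 p γ β (flipB x) y := by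
  have h := Fm_comm_E2 p γ β
  have h2 := congrFun (congrFun h.eq x) y
  rw [mulF] at h2
  rw [Fmul] at h2
  exact h2.symm

/-! ### The classical cut value and the per-edge expectation -/

/-- The cut value of a single pair. -/
noncomputable def cval (y : Bool × Bool) : ℝ := (1 - sgn y.1 * sgn y.2) / 2

lemma CMCval_eq_sum {m : ℕ} (w : Str (2 * m)) : CMCval m w = ∑ k, cval (pr w k) := rfl

lemma cval_nonneg (y : Bool × Bool) : 0 ≤ cval y := by
  rcases y with ⟨a, b⟩; cases a <;> cases b <;> norm_num [cval, sgn]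

lemma cval_le_one (y : Bool × Bool) : cval y ≤ 1 := by
  rcases y with ⟨a, b⟩; cases a <;> cases b <;> norm_num [cval, sgn]

lemma cval_flipB (y : Bool × Bool) : cval (flipB y) = cval y := by
  rcases y with ⟨a, b⟩; cases a <;> cases b <;> norm_num [cval, sgn, flipB]

/-- The per-edge expectation value of a two-qubit unitary `E` on input pair `y`. -/
noncomputable def gval (E : Q2) (y : Bool × Bool) : ℝ :=
  ∑ x, Complex.normSq (E x y) * cval x

lemma gval_nonneg (E : Q2) (y : Bool × Bool) : 0 ≤ gval E y :=
  Finset.sum_nonneg fun x _ => mul_nonneg (Complex.normSq_nonneg _) (cval_nonneg x)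

lemma gval_flip (E : Q2) (hflip : ∀ x y, E x (flipB y) = E (flipB x) y) (y : Bool × Bool) :
    gval E (flipB y) = gval E y := by
  unfold gval
  rw [Finset.sum_congr rfl fun x _ => by rw [hflip]]
  refine Fintype.sum_equiv (Function.Involutive.toPerm flipB flipB_flipB) _ _ fun x => ?_
  show Complex.normSq (E (flipB x) y) * cval x = Complex.normSq (E (flipB x) y) * cval (flipB x)
  rw [cval_flipB]

lemma gval_total (E : Q2) (hrow : ∀ x, ∑ y, Complex.normSq (E x y) = 1) :
    ∑ y, gval E y = 2 := by
  unfold gval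
  rw [Finset.sum_comm]
  rw [Finset.sum_congr rfl fun x _ => by
    rw [← Finset.sum_mul, hrow x, one_mul]]
  simp [Fintype.sum_prod_type, Fintype.sum_bool, cval, sgn]
  norm_num

/-! ### The cost operator is diagonal -/

lemma CMCop_diag (m : ℕ) : CMCop m = Matrix.diagonal fun z => ((CMCval m z : ℝ) : ℂ) := by
  ext z z'
  unfold CMCop
  rw [Matrix.sum_apply]
  by_cases h : z = z'
  · subst h
    rw [Matrix.diagonal_apply_eq]
    rw [CMCval_eq_sum, Complex.ofReal_sum]
    refine Finset.sum_congr rfl fun k _ => ?_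
    unfold PauliZ
    rw [Matrix.diagonal_mul_diagonal, Matrix.smul_apply, Matrix.sub_apply,
      Matrix.one_apply_eq, Matrix.diagonal_apply_eq]
    unfold cval pr sgn
    rcases hb1 : z (v₁ m k) <;> rcases hb2 : z (v₂ m k) <;>
      simp [hb1, hb2, Complex.ext_iff] <;> norm_num
  · rw [Matrix.diagonal_apply_ne _ h]
    refine Finset.sum_eq_zero fun k _ => ?_
    unfold PauliZ
    rw [Matrix.diagonal_mul_diagonal, Matrix.smul_apply, Matrix.sub_apply,
      Matrix.one_apply_ne h, Matrix.diagonal_apply_ne _ h]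
    simp

/-! ### The key factorization of the expectation value -/

lemma Tc_apply {m : ℕ} (E : Q2) (z z' : Str (2 * m)) :
    Tc m E z z' = ∏ j, E (pr z j) (pr z' j) := rfl

lemma normSq_Tc {m : ℕ} (E : Q2) (z w : Str (2 * m)) :
    Complex.normSq (Tc m E z w) = ∏ j, Complex.normSq (E (pr z j) (pr w j)) := by
  rw [Tc_apply, map_prod Complex.normSq]

lemma key_factor {m : ℕ} (E : Q2) (hcol : ∀ x, ∑ y, Complex.normSq (E y x) = 1)
    (w : Str (2 * m)) (k : Fin m) :
    ∑ z : Str (2 * m), cval (pr z k) * Complex.normSq (Tc m E z w)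
      = gval E (pr w k) := by
  have step1 : ∀ z : Str (2 * m), cval (pr z k) * Complex.normSq (Tc m E z w)
      = ∏ j, ((if j = k then cval (pr z j) else 1) * Complex.normSq (E (pr z j) (pr w j))) := by
    intro z
    rw [normSq_Tc, Finset.prod_mul_distrib, Finset.prod_ite_eq' Finset.univ k
      (fun j => cval (pr z j))]
    simp
  rw [Finset.sum_congr rfl fun z _ => step1 z]
  rw [show (∑ z : Str (2 * m), ∏ j, ((if j = k then cval (pr z j) else 1)
        * Complex.normSq (E (pr z j) (pr w j))))
      = ∑ g : Fin m → Bool × Bool, ∏ j, ((if j = k then cval (g j) else 1)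
        * Complex.normSq (E (g j) (pr w j))) from
    sum_str_eq (fun g => ∏ j, ((if j = k then cval (g j) else 1)
        * Complex.normSq (E (g j) (pr w j))))]
  rw [← Fintype.piFinset_univ,
    ← Finset.prod_univ_sum (fun _ => (Finset.univ : Finset (Bool × Bool)))
      (fun j x => (if j = k then cval x else 1) * Complex.normSq (E x (pr w j)))]
  rw [Finset.prod_congr rfl (fun j _ => show
      (∑ x : Bool × Bool, (if j = k then cval x else 1) * Complex.normSq (E x (pr w j)))
        = if j = k then gval E (pr w k) else 1 by
    by_cases hj : j = k
    · subst hj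
      rw [if_pos rfl]
      unfold gval
      refine Finset.sum_congr rfl fun x _ => ?_
      rw [if_pos rfl, mul_comm]
    · rw [if_neg hj]
      rw [Finset.sum_congr rfl fun x _ => by rw [if_neg hj, one_mul]]
      exact hcol (pr w j))]
  rw [Finset.prod_ite_eq' Finset.univ k (fun _ => gval E (pr w k))]
  simp

lemma diag_expect {m : ℕ} (U : Mat (2 * m)) (d : Str (2 * m) → ℝ) (w : Str (2 * m)) :
    (Uᴴ * Matrix.diagonal (fun z => ((d z : ℝ) : ℂ)) * U) w w
      = ((∑ z, d z * Complex.normSq (U z w) : ℝ) : ℂ) := by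
  rw [Matrix.mul_apply]
  rw [Finset.sum_congr rfl fun z _ => show
      (Uᴴ * Matrix.diagonal (fun z => ((d z : ℝ) : ℂ))) w z * U z w
        = ((d z * Complex.normSq (U z w) : ℝ) : ℂ) by
    rw [Matrix.mul_diagonal, Matrix.conjTranspose_apply, Complex.star_def]
    rw [show (starRingEnd ℂ) (U z w) * ↑(d z) * U z w
        = ↑(d z) * ((starRingEnd ℂ) (U z w) * U z w) by ring]
    rw [← Complex.normSq_eq_conj_mul_self]
    push_cast
    ring]
  rw [← Complex.ofReal_sum]

end Stmt14

theorem stmt14 (m : ℕ) (hm : 1 ≤ m) (p : ℕ) (hp : 1 ≤ p) (γ β : Fin p → ℝ)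
    (w : Str (2 * m)) (hw : (m : ℝ) / 2 ≤ CMCval m w) :
    (((qaoaU m p γ β)ᴴ * CMCop m * qaoaU m p γ β) w w).re ≤ CMCval m w := by
  classical
  set E := Stmt14.E2 p γ β with hE
  have hcol := Stmt14.E2_col p γ β
  have hrow := Stmt14.E2_row p γ β
  have hflip := Stmt14.E2_flip p γ β
  rw [Stmt14.qaoaU_eq, Stmt14.CMCop_diag, Stmt14.diag_expect, Complex.ofReal_re]
  -- reduce the expectation to a sum of per-edge expectations
  have hsum : (∑ z : Str (2 * m), CMCval m z * Complex.normSq (Stmt14.Tc m E z w))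
      = ∑ k : Fin m, Stmt14.gval E (Stmt14.pr w k) := by
    rw [Finset.sum_congr rfl fun z _ => by
      rw [Stmt14.CMCval_eq_sum z, Finset.sum_mul]]
    rw [Finset.sum_comm]
    exact Finset.sum_congr rfl fun k _ => Stmt14.key_factor E hcol w k
  rw [hsum]
  -- basic facts about gval
  set a := Stmt14.gval E (true, false) with ha
  set b := Stmt14.gval E (true, true) with hb
  have hft : Stmt14.gval E (false, true) = a := Stmt14.gval_flip E hflip (true, false)
  have hff : Stmt14.gval E (false, false) = b := Stmt14.gval_flip E hflip (true, true)
  have htot : a + b = 1 := by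
    have h2 := Stmt14.gval_total E hrow
    rw [Fintype.sum_prod_type, Fintype.sum_bool, Fintype.sum_bool, Fintype.sum_bool] at h2
    rw [hft, hff] at h2
    rw [← ha, ← hb] at h2
    linarith
  have ha0 : 0 ≤ a := Stmt14.gval_nonneg E _
  have hb0 : 0 ≤ b := Stmt14.gval_nonneg E _
  -- pointwise description of gval
  have hpoint : ∀ k : Fin m, Stmt14.gval E (Stmt14.pr w k)
      = Stmt14.cval (Stmt14.pr w k) * a + (1 - Stmt14.cval (Stmt14.pr w k)) * b := by
    intro k
    rcases hp : Stmt14.pr w k with ⟨x, y⟩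
    cases x <;> cases y <;>
      simp [Stmt14.cval, sgn, hft, hff, ← ha, ← hb] <;> ring
  rw [Finset.sum_congr rfl fun k _ => hpoint k]
  rw [Finset.sum_add_distrib, ← Finset.sum_mul, ← Finset.sum_mul,
    Finset.sum_sub_distrib, Finset.sum_const, Finset.card_univ, Fintype.card_fin,
    nsmul_eq_mul, mul_one]
  rw [← Stmt14.CMCval_eq_sum w]
  -- conclude
  nlinarith [hw, htot, ha0, hb0]
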